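/- arXiv:2602.05893 — 6 statements merged into one kernel-verified Lean document; each statement's English description precedes it below -/
import Mathlib

section
/- Let x ∈ ℝ^n be non-Pareto-critical, let λ* minimize ‖Σλ_j ∇f_j(x)‖₂² over the simplex, and set g := Σλ*_j ∇f_j(x) ≠ 0. Then the normalized negative direction n := -g/‖g‖₂ is an optimal solution of min_{‖d‖₂ ≤ 1} max_j ∇f_j(x)ᵀ d, with optimal value -‖g‖₂. -/
/-- if `x` is not Pareto critical, `λ*` minimizes `‖Σ λ_j ∇f_j(x)‖²` over the
simplex and `g = Σ λ*_j ∇f_j(x) ≠ 0`, then `n = -g/‖g‖` is optimal for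
`min_{‖d‖ ≤ 1} max_j ∇f_j(x)ᵀ d`, with optimal value `-‖g‖`. -/
theorem stmt4 {n m : ℕ} (hm : 0 < m) (f : Fin m → EuclideanSpace ℝ (Fin n) → ℝ)
    (G : Fin m → EuclideanSpace ℝ (Fin n)) (x : EuclideanSpace ℝ (Fin n))
    (hgrad : ∀ j, HasGradientAt (f j) (G j) x)
    (lam : Fin m → ℝ) (hpos : ∀ j, 0 ≤ lam j) (hsum : ∑ j, lam j = 1)
    (hminim : ∀ mu : Fin m → ℝ, (∀ j, 0 ≤ mu j) → ∑ j, mu j = 1 →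
      ‖∑ j, lam j • G j‖ ^ 2 ≤ ‖∑ j, mu j • G j‖ ^ 2)
    (g : EuclideanSpace ℝ (Fin n)) (hg : g = ∑ j, lam j • G j) (hgne : g ≠ 0) :
    ‖-(‖g‖⁻¹ • g)‖ ≤ 1 ∧
    Finset.univ.sup' ⟨⟨0, hm⟩, Finset.mem_univ _⟩
      (fun j => (inner ℝ (G j) (-(‖g‖⁻¹ • g)) : ℝ)) = -‖g‖ ∧
    ∀ d : EuclideanSpace ℝ (Fin n), ‖d‖ ≤ 1 →
      -‖g‖ ≤ Finset.univ.sup' ⟨⟨0, hm⟩, Finset.mem_univ _⟩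
        (fun j => (inner ℝ (G j) d : ℝ)) := by
  have hgnorm : (0:ℝ) < ‖g‖ := norm_pos_iff.mpr hgne
  -- key variational inequality: ⟪g, G j⟫ ≥ ‖g‖²
  have key : ∀ j0 : Fin m, ‖g‖^2 ≤ (inner ℝ g (G j0) : ℝ) := by
    intro j0
    by_contra hlt
    push_neg at hlt
    set v := G j0 - g with hv
    have hcneg : (inner ℝ g v : ℝ) < 0 := by
      have h1 : (inner ℝ g v : ℝ) = inner ℝ g (G j0) - ‖g‖^2 := by
        rw [hv, inner_sub_right, real_inner_self_eq_norm_sq]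
      rw [h1]; linarith
    set c : ℝ := inner ℝ g v with hc
    have main : ∀ t : ℝ, 0 ≤ t → t ≤ 1 → 0 ≤ 2*(t*c) + t^2 * ‖v‖^2 := by
      intro t ht0 ht1
      have hmu := hminim (fun j => (1-t)*lam j + t*(if j = j0 then 1 else 0))
        (fun j => by
          rcases eq_or_ne j j0 with h | h <;> simp [h] <;>
            nlinarith [hpos j, hpos j0])
        (by
          have e : ∑ j, ((1-t)*lam j + t*(if j = j0 then 1 else 0)) =
              (1-t)*(∑ j, lam j) + t*(∑ j, if j = j0 then (1:ℝ) else 0) := by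
            rw [Finset.sum_add_distrib, Finset.mul_sum, Finset.mul_sum]
          have e2 : ∑ j, (if j = j0 then (1:ℝ) else 0) = 1 := by simp
          rw [e, hsum, e2]; ring)
      have hS : ∑ j, ((1-t)*lam j + t*(if j = j0 then 1 else 0)) • G j = g + t • v := by
        have e1 : ∀ j, ((1-t)*lam j + t*(if j = j0 then 1 else 0)) • G j
            = (1-t) • (lam j • G j) + t • ((if j = j0 then (1:ℝ) else 0) • G j) := by
          intro j; rw [add_smul, mul_smul, mul_smul]
        simp only [e1, Finset.sum_add_distrib, ← Finset.smul_sum]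
        have e2 : ∑ j, (if j = j0 then (1:ℝ) else 0) • G j = G j0 := by
          simp [Finset.sum_ite_eq']
        rw [e2, ← hg, hv]
        module
      rw [← hg, hS] at hmu
      have expand : ‖g + t • v‖^2 = ‖g‖^2 + 2*(t*c) + t^2*‖v‖^2 := by
        rw [norm_add_sq_real, real_inner_smul_right, norm_smul,
          Real.norm_eq_abs, abs_of_nonneg ht0, ← hc, mul_pow]
      rw [expand] at hmu
      linarith
    rcases eq_or_lt_of_le (norm_nonneg v) with hA | hA
    · have := main 1 zero_le_one le_rfl
      rw [← hA] at this
      simp at this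
      linarith
    · set t := min 1 (-c / ‖v‖^2) with ht
      have htpos : 0 < t := lt_min one_pos (div_pos (neg_pos.mpr hcneg) (by positivity))
      have ht1 : t ≤ 1 := min_le_left _ _
      have htle : t * ‖v‖^2 ≤ -c := by
        have : t ≤ -c / ‖v‖^2 := min_le_right _ _
        calc t * ‖v‖^2 ≤ (-c / ‖v‖^2) * ‖v‖^2 := by nlinarith
          _ = -c := by field_simp
      have := main t htpos.le ht1
      nlinarith
  -- weighted sums
  have hsumg : ∑ j, lam j * (inner ℝ g (G j) : ℝ) = ‖g‖^2 := by
    have : (inner ℝ g g : ℝ) = ∑ j, lam j * inner ℝ g (G j) := by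
      conv_lhs => rw [show (inner ℝ g g : ℝ) = inner ℝ g (∑ j, lam j • G j) from by rw [← hg]]
      rw [inner_sum]
      simp only [real_inner_smul_right]
    rw [← real_inner_self_eq_norm_sq, this]
  -- existence of an active index with equality
  have hex : ∃ j0 : Fin m, (inner ℝ g (G j0) : ℝ) = ‖g‖^2 := by
    by_contra hne
    push_neg at hne
    have hstrict : ∀ j, lam j ≠ 0 → lam j * ‖g‖^2 < lam j * inner ℝ g (G j) := by
      intro j hj
      have hlj : 0 < lam j := lt_of_le_of_ne (hpos j) (Ne.symm hj)
      have := lt_of_le_of_ne (key j) (Ne.symm (hne j))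
      nlinarith
    obtain ⟨j1, hj1⟩ : ∃ j : Fin m, lam j ≠ 0 := by
      by_contra hall
      push_neg at hall
      simp [hall] at hsum
    have hlt : ∑ j, lam j * ‖g‖^2 < ∑ j, lam j * inner ℝ g (G j) := by
      apply Finset.sum_lt_sum
      · intro i _
        rcases eq_or_ne (lam i) 0 with h | h
        · simp [h]
        · exact (hstrict i h).le
      · exact ⟨j1, Finset.mem_univ _, hstrict j1 hj1⟩
    rw [hsumg, ← Finset.sum_mul, hsum, one_mul] at hlt
    exact lt_irrefl _ hlt
  refine ⟨?_, ?_, ?_⟩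
  · rw [norm_neg, norm_smul]
    simp [abs_of_nonneg (inv_nonneg.mpr hgnorm.le), inv_mul_cancel₀ hgnorm.ne']
  · apply le_antisymm
    · apply Finset.sup'_le
      intro j _
      have : (inner ℝ (G j) (-(‖g‖⁻¹ • g)) : ℝ) = -(‖g‖⁻¹ * inner ℝ g (G j)) := by
        rw [inner_neg_right, real_inner_smul_right, real_inner_comm]
      rw [this]
      have := key j
      have h2 : ‖g‖⁻¹ * ‖g‖^2 ≤ ‖g‖⁻¹ * inner ℝ g (G j) := by
        apply mul_le_mul_of_nonneg_left this (inv_nonneg.mpr hgnorm.le)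
      have h3 : ‖g‖⁻¹ * ‖g‖^2 = ‖g‖ := by
        field_simp
      linarith
    · obtain ⟨j0, hj0⟩ := hex
      have hle := Finset.le_sup' (fun j => (inner ℝ (G j) (-(‖g‖⁻¹ • g)) : ℝ))
        (Finset.mem_univ j0)
      have : (inner ℝ (G j0) (-(‖g‖⁻¹ • g)) : ℝ) = -‖g‖ := by
        rw [inner_neg_right, real_inner_smul_right, real_inner_comm, hj0]
        field_simp
      linarith
  · intro d hd
    have havg : ∑ j, lam j * (inner ℝ (G j) d : ℝ)
        ≤ Finset.univ.sup' ⟨⟨0, hm⟩, Finset.mem_univ _⟩ (fun j => (inner ℝ (G j) d : ℝ)) := by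
      calc ∑ j, lam j * (inner ℝ (G j) d : ℝ)
          ≤ ∑ j, lam j * Finset.univ.sup' ⟨⟨0, hm⟩, Finset.mem_univ _⟩
              (fun j => (inner ℝ (G j) d : ℝ)) := by
            apply Finset.sum_le_sum
            intro i _
            exact mul_le_mul_of_nonneg_left
              (Finset.le_sup' (fun j => (inner ℝ (G j) d : ℝ)) (Finset.mem_univ i)) (hpos i)
        _ = _ := by rw [← Finset.sum_mul, hsum, one_mul]
    have hgd : (inner ℝ g d : ℝ) = ∑ j, lam j * inner ℝ (G j) d := by
      rw [hg, sum_inner]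
      simp only [real_inner_smul_left]
    have hcs : -(‖g‖ * ‖d‖) ≤ (inner ℝ g d : ℝ) := neg_le_of_abs_le (abs_real_inner_le_norm g d)
    have : ‖g‖ * ‖d‖ ≤ ‖g‖ := by nlinarith
    linarith [hgd ▸ hcs, havg]
end

section
/- Let g be the minimal-norm element of the convex hull of the gradients ∇f_1(x),...,∇f_m(x). Then ‖g‖₂² = - max_{j ∈ {1,...,m}} ∇f_j(x)ᵀ(-g); equivalently, max_j ∇f_j(x)ᵀ(-g) = -‖g‖₂². -/
/-- with `g` the minimal-norm element of the convex hull of the gradients,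
`max_j ∇f_j(x)ᵀ(-g) = -‖g‖²`. -/
theorem stmt7 {n m : ℕ} (hm : 0 < m) (f : Fin m → EuclideanSpace ℝ (Fin n) → ℝ)
    (G : Fin m → EuclideanSpace ℝ (Fin n)) (x : EuclideanSpace ℝ (Fin n))
    (hgrad : ∀ j, HasGradientAt (f j) (G j) x)
    (lam : Fin m → ℝ) (hpos : ∀ j, 0 ≤ lam j) (hsum : ∑ j, lam j = 1)
    (hminim : ∀ mu : Fin m → ℝ, (∀ j, 0 ≤ mu j) → ∑ j, mu j = 1 →
      ‖∑ j, lam j • G j‖ ^ 2 ≤ ‖∑ j, mu j • G j‖ ^ 2)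
    (g : EuclideanSpace ℝ (Fin n)) (hg : g = ∑ j, lam j • G j) :
    Finset.univ.sup' ⟨⟨0, hm⟩, Finset.mem_univ _⟩
      (fun j => (inner ℝ (G j) (-g) : ℝ)) = -‖g‖ ^ 2 := by
  -- Step 1: ∀ j, ‖g‖² ≤ ⟪G j, g⟫
  have h1 : ∀ j, ‖g‖ ^ 2 ≤ (inner ℝ (G j) g : ℝ) := by
    intro j
    set d : EuclideanSpace ℝ (Fin n) := G j - g with hd
    have hstep : ∀ t : ℝ, 0 < t → t ≤ 1 →
        0 ≤ 2 * (inner ℝ g d : ℝ) + t * ‖d‖ ^ 2 := by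
      intro t ht ht1
      have hmu : ∀ i, 0 ≤ (1 - t) * lam i + t * (if i = j then (1:ℝ) else 0) := by
        intro i
        have := hpos i
        have : (0:ℝ) ≤ if i = j then (1:ℝ) else 0 := by split <;> norm_num
        nlinarith
      have hmusum : ∑ i, ((1 - t) * lam i + t * (if i = j then (1:ℝ) else 0)) = 1 := by
        rw [Finset.sum_add_distrib, ← Finset.mul_sum, ← Finset.mul_sum, hsum]
        simp
      have hmin := hminim _ hmu hmusum
      have hmuG : ∑ i, ((1 - t) * lam i + t * (if i = j then (1:ℝ) else 0)) • G i
          = g + t • d := by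
        have : ∀ i, ((1 - t) * lam i + t * (if i = j then (1:ℝ) else 0)) • G i
            = (1 - t) • (lam i • G i) + t • ((if i = j then (1:ℝ) else 0) • G i) := by
          intro i; rw [add_smul, mul_smul, mul_smul]
        rw [Finset.sum_congr rfl (fun i _ => this i), Finset.sum_add_distrib,
          ← Finset.smul_sum, ← Finset.smul_sum, ← hg]
        have : ∑ i, (if i = j then (1:ℝ) else 0) • G i = G j := by
          simp [ite_smul]
        rw [this, hd, smul_sub, sub_smul, one_smul]
        abel
      rw [← hg, hmuG] at hmin
      have hexp : ‖g + t • d‖ ^ 2 = ‖g‖ ^ 2 + 2 * (t * (inner ℝ g d : ℝ)) + t ^ 2 * ‖d‖ ^ 2 := by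
        rw [norm_add_sq_real, real_inner_smul_right, norm_smul, mul_pow]
        simp [abs_of_pos ht]
      rw [hexp] at hmin
      nlinarith
    have hgd : 0 ≤ (inner ℝ g d : ℝ) := by
      by_contra hneg
      push_neg at hneg
      set a : ℝ := (inner ℝ g d : ℝ)
      set b : ℝ := ‖d‖ ^ 2
      have hb : 0 ≤ b := by positivity
      have ht0 : 0 < min 1 ((-a) / (b + 1)) := by
        apply lt_min one_pos
        apply div_pos (by linarith) (by linarith)
      have := hstep _ ht0 (min_le_left _ _)
      have htle : min 1 ((-a) / (b + 1)) ≤ (-a) / (b + 1) := min_le_right _ _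
      have hble : min 1 ((-a) / (b + 1)) * b ≤ ((-a) / (b + 1)) * b :=
        mul_le_mul_of_nonneg_right htle hb
      have : ((-a) / (b + 1)) * b ≤ -a := by
        rw [div_mul_eq_mul_div, div_le_iff₀ (by linarith)]
        nlinarith
      nlinarith
    have : (inner ℝ g d : ℝ) = (inner ℝ (G j) g : ℝ) - ‖g‖ ^ 2 := by
      rw [hd, inner_sub_right, real_inner_self_eq_norm_sq, real_inner_comm]
    linarith [this ▸ hgd]
  -- Step 2: ∃ j, ⟪G j, g⟫ ≤ ‖g‖²
  have hsumg : ∑ i, lam i * (inner ℝ (G i) g : ℝ) = ‖g‖ ^ 2 := by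
    have : ∑ i, lam i * (inner ℝ (G i) g : ℝ) = (inner ℝ (∑ i, lam i • G i) g : ℝ) := by
      rw [sum_inner]
      exact Finset.sum_congr rfl fun i _ => (real_inner_smul_left _ _ _).symm
    rw [this, ← hg, real_inner_self_eq_norm_sq, sq]
  have h2 : ∃ j, (inner ℝ (G j) g : ℝ) ≤ ‖g‖ ^ 2 := by
    by_contra hc
    push_neg at hc
    obtain ⟨j0, hj0⟩ : ∃ j0, 0 < lam j0 := by
      by_contra hc2
      push_neg at hc2
      have : ∀ j, lam j = 0 := fun j => le_antisymm (hc2 j) (hpos j)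
      simp [this] at hsum
    have hlt : ∑ i, lam i * ‖g‖ ^ 2 < ∑ i, lam i * (inner ℝ (G i) g : ℝ) := by
      apply Finset.sum_lt_sum
      · intro i _
        exact mul_le_mul_of_nonneg_left (le_of_lt (hc i)) (hpos i)
      · exact ⟨j0, Finset.mem_univ _, mul_lt_mul_of_pos_left (hc j0) hj0⟩
    rw [← Finset.sum_mul, hsum, one_mul, hsumg] at hlt
    exact lt_irrefl _ hlt
  -- Conclude
  obtain ⟨j0, hj0⟩ := h2
  apply le_antisymm
  · apply Finset.sup'_le
    intro j _
    have := h1 j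
    simp only [inner_neg_right]
    linarith
  · have hle : -‖g‖ ^ 2 ≤ (inner ℝ (G j0) (-g) : ℝ) := by
      simp only [inner_neg_right]
      linarith
    exact hle.trans (Finset.le_sup' (fun j => (inner ℝ (G j) (-g) : ℝ)) (Finset.mem_univ j0))
end

section
/- If x is not Pareto critical and g is the minimal-norm element of the convex hull of the gradients at x (so g ≠ 0), then -g is a common descent direction: ∇f_j(x)ᵀ(-g) < 0 for all j, and consequently there exists t₀ > 0 such that f_j(x + t(-g)) < f_j(x) for all j ∈ {1,...,m} and all t ∈ (0, t₀]. -/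
/-- if `x` is not Pareto critical and `g ≠ 0` is the minimal-norm convex
combination of the gradients, then `-g` is a common descent direction. -/
theorem stmt8 {n m : ℕ} (f : Fin m → EuclideanSpace ℝ (Fin n) → ℝ)
    (G : Fin m → EuclideanSpace ℝ (Fin n)) (x : EuclideanSpace ℝ (Fin n))
    (hgrad : ∀ j, HasGradientAt (f j) (G j) x)
    (lam : Fin m → ℝ) (hpos : ∀ j, 0 ≤ lam j) (hsum : ∑ j, lam j = 1)
    (hminim : ∀ mu : Fin m → ℝ, (∀ j, 0 ≤ mu j) → ∑ j, mu j = 1 →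
      ‖∑ j, lam j • G j‖ ^ 2 ≤ ‖∑ j, mu j • G j‖ ^ 2)
    (g : EuclideanSpace ℝ (Fin n)) (hg : g = ∑ j, lam j • G j) (hgne : g ≠ 0) :
    (∀ j, (inner ℝ (G j) (-g) : ℝ) < 0) ∧
    ∃ t₀ : ℝ, 0 < t₀ ∧ ∀ t : ℝ, 0 < t → t ≤ t₀ → ∀ j, f j (x + t • (-g)) < f j x := by
  have hgsq : 0 < ‖g‖ ^ 2 := by
    have := norm_pos_iff.mpr hgne
    positivity
  -- Key: ⟪G j, g⟫ ≥ ‖g‖²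
  have hkey : ∀ j, ‖g‖ ^ 2 ≤ (inner ℝ (G j) g : ℝ) := by
    intro j
    by_contra h
    push_neg at h
    set C : ℝ := ‖G j - g‖ ^ 2 with hC
    set d : ℝ := ‖g‖ ^ 2 - (inner ℝ (G j) g : ℝ) with hd
    have hdpos : 0 < d := sub_pos.mpr h
    have hCnn : 0 ≤ C := by positivity
    set t : ℝ := min 1 (d / (C + 1)) with ht
    have htpos : 0 < t := lt_min one_pos (by positivity)
    have ht1 : t ≤ 1 := min_le_left _ _
    have ht2 : t ≤ d / (C + 1) := min_le_right _ _
    set mu : Fin m → ℝ := fun j' => lam j' + t * ((if j' = j then 1 else 0) - lam j') with hmu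
    have hmupos : ∀ j', 0 ≤ mu j' := by
      intro j'
      by_cases hj : j' = j
      · simp only [hmu, hj, if_true, eq_self_iff_true]
        nlinarith [hpos j]
      · simp only [hmu, if_neg hj]
        nlinarith [hpos j']
    have hmusum : ∑ j', mu j' = 1 := by
      simp [hmu, Finset.sum_add_distrib, ← Finset.mul_sum, Finset.sum_sub_distrib, hsum]
    have hmusmul : ∑ j', mu j' • G j' = g + t • (G j - g) := by
      have : ∀ j', mu j' • G j' = lam j' • G j' +
          (t • ((if j' = j then (1:ℝ) else 0) • G j' - lam j' • G j')) := by
        intro j'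
        simp [hmu, add_smul, sub_smul, mul_smul, smul_sub]
      rw [Finset.sum_congr rfl fun j' _ => this j', Finset.sum_add_distrib,
        ← Finset.smul_sum, Finset.sum_sub_distrib]
      simp [ite_smul, ← hg]
    have hmin := hminim mu hmupos hmusum
    rw [← hg, hmusmul] at hmin
    have hexp : ‖g + t • (G j - g)‖ ^ 2
        = ‖g‖ ^ 2 + 2 * (t * ((inner ℝ g (G j) : ℝ) - ‖g‖ ^ 2)) + t ^ 2 * C := by
      rw [norm_add_sq_real, norm_smul, real_inner_smul_right, inner_sub_right,
        real_inner_self_eq_norm_sq]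
      simp [hC, mul_pow]
      try ring
    rw [hexp, real_inner_comm] at hmin
    -- hmin : ‖g‖² ≤ ‖g‖² + 2t(⟪Gj,g⟫-‖g‖²) + t²C, i.e. 0 ≤ -2td + t²C
    have htC : t * C < 2 * d := by
      have h1 : t * C ≤ d / (C + 1) * C :=
        mul_le_mul_of_nonneg_right ht2 hCnn
      have h2 : d / (C + 1) * C < 2 * d := by
        rw [div_mul_eq_mul_div, div_lt_iff₀ (by positivity)]
        nlinarith
      linarith
    nlinarith [sq_nonneg t, htpos]
  have hdesc : ∀ j, (inner ℝ (G j) (-g) : ℝ) < 0 := by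
    intro j
    rw [inner_neg_right]
    have := hkey j
    linarith
  refine ⟨hdesc, ?_⟩
  -- derivative of t ↦ f j (x + t • (-g)) at 0 is ⟪G j, -g⟫ < 0
  have hev : ∀ j, ∀ᶠ t : ℝ in nhdsWithin 0 (Set.Ioi 0),
      f j (x + t • (-g)) < f j x := by
    intro j
    have hline : HasDerivAt (fun t : ℝ => x + t • (-g)) (-g) 0 := by
      simpa using ((hasDerivAt_id (0:ℝ)).smul_const (-g)).const_add x
    have hF' : HasFDerivAt (f j)
        ((InnerProductSpace.toDual ℝ (EuclideanSpace ℝ (Fin n))) (G j))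
        (x + (0:ℝ) • (-g)) := by
      simpa using (hgrad j).hasFDerivAt
    have hcomp : HasDerivAt (fun t : ℝ => f j (x + t • (-g)))
        ((inner ℝ (G j) (-g) : ℝ)) 0 := by
      have := hF'.comp_hasDerivAt 0 hline
      simpa [InnerProductSpace.toDual_apply_apply, Function.comp_def] using this
    have hslope := hasDerivAt_iff_tendsto_slope.mp hcomp
    have hslope' : Filter.Tendsto (slope (fun t : ℝ => f j (x + t • (-g))) 0)
        (nhdsWithin 0 (Set.Ioi 0)) (nhds ((inner ℝ (G j) (-g) : ℝ))) :=
      hslope.mono_left (nhdsWithin_mono _ (by intro y hy; exact ne_of_gt hy))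
    have hneg : ∀ᶠ t : ℝ in nhdsWithin 0 (Set.Ioi 0),
        slope (fun t : ℝ => f j (x + t • (-g))) 0 t < 0 :=
      hslope'.eventually_lt_const (hdesc j)
    filter_upwards [hneg, self_mem_nhdsWithin] with t hts htpos
    have : (f j (x + t • (-g)) - f j (x + (0:ℝ) • (-g))) / (t - 0) < 0 := by
      simpa [slope_def_field, div_eq_inv_mul] using hts
    simp only [zero_smul, add_zero, sub_zero] at this
    have ht0 : (0:ℝ) < t := htpos
    rcases div_neg_iff.mp this with ⟨_, h2⟩ | ⟨h1, _⟩
    · linarith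
    · linarith
  have hall : ∀ᶠ t : ℝ in nhdsWithin 0 (Set.Ioi 0),
      ∀ j, f j (x + t • (-g)) < f j x := Filter.eventually_all.mpr hev
  rw [Filter.eventually_iff, mem_nhdsGT_iff_exists_Ioc_subset] at hall
  obtain ⟨u, hu, hsub⟩ := hall
  exact ⟨u, hu, fun t ht1 ht2 j => hsub ⟨ht1, ht2⟩ j⟩
end

section
/- The optimal value of min_{‖d‖₂ ≤ 1} max_j ∇f_j(x)ᵀ d is always nonpositive, and it equals zero if and only if x is Pareto critical. -/
open Finset

/-- the optimal value of `min_{‖d‖ ≤ 1} max_j ∇f_j(x)ᵀ d` is nonpositive,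
and is zero iff `x` is Pareto critical. -/
theorem stmt9 {n m : ℕ} (hm : 0 < m) (f : Fin m → EuclideanSpace ℝ (Fin n) → ℝ)
    (G : Fin m → EuclideanSpace ℝ (Fin n)) (x : EuclideanSpace ℝ (Fin n))
    (hgrad : ∀ j, HasGradientAt (f j) (G j) x) :
    sInf {r : ℝ | ∃ d : EuclideanSpace ℝ (Fin n), ‖d‖ ≤ 1 ∧
        r = Finset.univ.sup' ⟨⟨0, hm⟩, Finset.mem_univ _⟩
          (fun j => (inner ℝ (G j) d : ℝ))} ≤ 0 ∧
    (sInf {r : ℝ | ∃ d : EuclideanSpace ℝ (Fin n), ‖d‖ ≤ 1 ∧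
        r = Finset.univ.sup' ⟨⟨0, hm⟩, Finset.mem_univ _⟩
          (fun j => (inner ℝ (G j) d : ℝ))} = 0 ↔
      ∃ lam : Fin m → ℝ, (∀ j, 0 ≤ lam j) ∧ ∑ j, lam j = 1 ∧ ∑ j, lam j • G j = 0) := by
  set j0 : Fin m := ⟨0, hm⟩ with hj0
  set S := {r : ℝ | ∃ d : EuclideanSpace ℝ (Fin n), ‖d‖ ≤ 1 ∧
      r = Finset.univ.sup' ⟨j0, Finset.mem_univ _⟩ (fun j => (inner ℝ (G j) d : ℝ))} with hS
  have hbdd : BddBelow S := by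
    refine ⟨-‖G j0‖, fun r hr => ?_⟩
    obtain ⟨d, hd, rfl⟩ := hr
    refine le_trans ?_ (Finset.le_sup' _ (Finset.mem_univ j0))
    have h1 : |(inner ℝ (G j0) d : ℝ)| ≤ ‖G j0‖ * ‖d‖ := abs_real_inner_le_norm _ _
    have h2 : ‖G j0‖ * ‖d‖ ≤ ‖G j0‖ * 1 :=
      mul_le_mul_of_nonneg_left hd (norm_nonneg _)
    nlinarith [abs_le.mp h1]
  have h0mem : (0 : ℝ) ∈ S := by
    refine ⟨0, by simp, ?_⟩
    simp [inner_zero_right]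
    exact le_antisymm (Finset.le_sup' (fun _ => (0:ℝ)) (Finset.mem_univ j0)) (Finset.sup'_le _ _ fun _ _ => le_rfl)
  have hle : sInf S ≤ 0 := csInf_le hbdd h0mem
  refine ⟨hle, ?_, ?_⟩
  · -- sInf S = 0 → Pareto critical
    intro hinf
    by_contra hcon
    have h0 : (0 : EuclideanSpace ℝ (Fin n)) ∉ convexHull ℝ (Set.range G) := by
      intro h0
      rw [_root_.convexHull_eq] at h0
      obtain ⟨ι, t, w, z, hw0, hw1, hz, hc⟩ := h0
      classical
      choose ch hch using fun i (hi : i ∈ t) => hz i hi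
      let c : ι → Fin m := fun i => if hi : i ∈ t then ch i hi else j0
      refine hcon ⟨fun j => ∑ i ∈ t.filter (fun i => c i = j), w i, ?_, ?_, ?_⟩
      · intro j
        exact Finset.sum_nonneg fun i hi => hw0 i (Finset.mem_filter.mp hi).1
      · rw [Finset.sum_fiberwise t c w]; exact hw1
      · have heq : ∑ j, (∑ i ∈ t.filter (fun i => c i = j), w i) • G j
            = ∑ j, ∑ i ∈ t.filter (fun i => c i = j), w i • z i := by
          refine Finset.sum_congr rfl fun j _ => ?_
          rw [Finset.sum_smul]
          refine Finset.sum_congr rfl fun i hi => ?_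
          obtain ⟨hit, hcij⟩ := Finset.mem_filter.mp hi
          have : G j = z i := by
            rw [← hcij]; simp only [c, dif_pos hit]; exact hch i hit
          rw [this]
        rw [heq, Finset.sum_fiberwise t c (fun i => w i • z i)]
        have hcm : t.centerMass w z = ∑ i ∈ t, w i • z i := by
          rw [Finset.centerMass, hw1, inv_one, one_smul]
        rw [← hcm, hc]
    obtain ⟨φ, u, hφ, hu⟩ := geometric_hahn_banach_closed_point
      (convex_convexHull ℝ _)
      (((Set.finite_range G).isCompact_convexHull ℝ).isClosed) h0
    rw [map_zero] at hu
    set v : EuclideanSpace ℝ (Fin n) :=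
      (InnerProductSpace.toDual ℝ (EuclideanSpace ℝ (Fin n))).symm φ with hv
    have hvin : ∀ y : EuclideanSpace ℝ (Fin n), (inner ℝ v y : ℝ) = φ y := fun y =>
      InnerProductSpace.toDual_symm_apply
    have hvne : v ≠ 0 := by
      intro h
      have := hφ (G j0) (subset_convexHull ℝ _ ⟨j0, rfl⟩)
      rw [← hvin, h, inner_zero_left] at this
      linarith
    set d : EuclideanSpace ℝ (Fin n) := ‖v‖⁻¹ • v with hd
    have hdn : ‖d‖ ≤ 1 := by
      rw [hd, norm_smul, norm_inv, norm_norm, inv_mul_cancel₀ (norm_ne_zero_iff.mpr hvne)]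
    have hneg : ∀ j, (inner ℝ (G j) d : ℝ) ≤ ‖v‖⁻¹ * u := by
      intro j
      have h1 : φ (G j) < u := hφ (G j) (subset_convexHull ℝ _ ⟨j, rfl⟩)
      have h2 : (inner ℝ (G j) d : ℝ) = ‖v‖⁻¹ * (inner ℝ v (G j) : ℝ) := by
        rw [hd, real_inner_smul_right, real_inner_comm]
      rw [h2, hvin]
      have hp : (0:ℝ) < ‖v‖⁻¹ := inv_pos.mpr (norm_pos_iff.mpr hvne)
      exact mul_le_mul_of_nonneg_left h1.le hp.le
    have hmem : Finset.univ.sup' ⟨j0, Finset.mem_univ _⟩ (fun j => (inner ℝ (G j) d : ℝ)) ∈ S :=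
      ⟨d, hdn, rfl⟩
    have hsup : Finset.univ.sup' ⟨j0, Finset.mem_univ _⟩ (fun j => (inner ℝ (G j) d : ℝ))
        ≤ ‖v‖⁻¹ * u := Finset.sup'_le _ _ fun j _ => hneg j
    have hltz : ‖v‖⁻¹ * u < 0 :=
      mul_neg_of_pos_of_neg (inv_pos.mpr (norm_pos_iff.mpr hvne)) hu
    have := csInf_le hbdd hmem
    rw [hinf] at this
    linarith
  · -- Pareto critical → sInf S = 0
    rintro ⟨lam, hlam0, hlam1, hlamG⟩
    refine le_antisymm hle (le_csInf ⟨0, h0mem⟩ ?_)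
    rintro r ⟨d, hdn, rfl⟩
    set M := Finset.univ.sup' ⟨j0, Finset.mem_univ _⟩ (fun j => (inner ℝ (G j) d : ℝ)) with hM
    have key : (0:ℝ) = ∑ j, lam j * (inner ℝ (G j) d : ℝ) := by
      have h1 : (inner ℝ (∑ j, lam j • G j) d : ℝ) = ∑ j, lam j * (inner ℝ (G j) d : ℝ) := by
        rw [sum_inner]
        exact Finset.sum_congr rfl fun j _ => real_inner_smul_left _ _ _
      rw [← h1, hlamG, inner_zero_left]
    have hle2 : ∑ j, lam j * (inner ℝ (G j) d : ℝ) ≤ ∑ j, lam j * M := by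
      refine Finset.sum_le_sum fun j _ => ?_
      exact mul_le_mul_of_nonneg_left
        (Finset.le_sup' (fun j => (inner ℝ (G j) d : ℝ)) (Finset.mem_univ j)) (hlam0 j)
    have hsum : ∑ j, lam j * M = M := by rw [← Finset.sum_mul, hlam1, one_mul]
    linarith [key, hle2, hsum.le]
end

section
/- (Per-iteration descent for MO-Adagrad) Suppose each ∇f_j is L_j-Lipschitz, L = max_j L_j, Φ(x) = max_j f_j(x). Let g be the minimal-norm convex combination of gradients at x^k, w > 0, and x^{k+1} = x^k - g/w. Then Φ(x^{k+1}) ≤ Φ(x^k) - ‖g‖₂²/w + (L/2)·‖g‖₂²/w². -/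
open scoped RealInnerProductSpace

lemma descent_lemma {E : Type*} [NormedAddCommGroup E] [InnerProductSpace ℝ E]
    [CompleteSpace E]
    {f : E → ℝ} {Gf : E → E} (hgrad : ∀ y, HasGradientAt f (Gf y) y)
    {L : ℝ} (hLip : ∀ y z, ‖Gf y - Gf z‖ ≤ L * ‖y - z‖) (x y : E) :
    f y ≤ f x + ⟪Gf x, y - x⟫ + L / 2 * ‖y - x‖ ^ 2 := by
  set d := y - x with hd
  have hderiv : ∀ t : ℝ, HasDerivAt (fun t : ℝ => f (x + t • d))
      ⟪Gf (x + t • d), d⟫ t := by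
    intro t
    have hc : HasDerivAt (fun t : ℝ => x + t • d) d t := by
      simpa using ((hasDerivAt_id t).smul_const d).const_add x
    have := ((hgrad (x + t • d)).hasFDerivAt).comp_hasDerivAt t hc
    simp at this
    exact this
  set h : ℝ → ℝ := fun t => f (x + t • d) - t * ⟪Gf x, d⟫ - L / 2 * t ^ 2 * ‖d‖ ^ 2
    with hh
  have hhd : ∀ t : ℝ, HasDerivAt h
      (⟪Gf (x + t • d), d⟫ - ⟪Gf x, d⟫ - L * t * ‖d‖ ^ 2) t := by
    intro t
    have h1 : HasDerivAt (fun t : ℝ => t * ⟪Gf x, d⟫) ⟪Gf x, d⟫ t := by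
      simpa using (hasDerivAt_id t).mul_const ⟪Gf x, d⟫
    have h2 : HasDerivAt (fun t : ℝ => L / 2 * t ^ 2 * ‖d‖ ^ 2)
        (L * t * ‖d‖ ^ 2) t := by
      have := ((hasDerivAt_pow 2 t).const_mul (L / 2)).mul_const (‖d‖ ^ 2)
      have he : L * t * ‖d‖ ^ 2 = L / 2 * (((2 : ℕ) : ℝ) * t ^ (2 - 1)) * ‖d‖ ^ 2 := by
        push_cast; ring
      rw [he]
      exact this
    have := ((hderiv t).sub h1).sub h2
    exact this
  have hanti : AntitoneOn h (Set.Icc (0:ℝ) 1) := by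
    apply antitoneOn_of_deriv_nonpos (convex_Icc 0 1)
    · exact fun t _ => (hhd t).continuousAt.continuousWithinAt
    · exact fun t _ => ((hhd t).differentiableAt).differentiableWithinAt
    · intro t ht
      rw [interior_Icc] at ht
      rw [(hhd t).deriv]
      have key : ⟪Gf (x + t • d) - Gf x, d⟫ ≤ L * t * ‖d‖ ^ 2 := by
        calc ⟪Gf (x + t • d) - Gf x, d⟫ ≤ ‖Gf (x + t • d) - Gf x‖ * ‖d‖ :=
              real_inner_le_norm _ _
          _ ≤ (L * ‖(x + t • d) - x‖) * ‖d‖ :=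
              mul_le_mul_of_nonneg_right (hLip _ _) (norm_nonneg _)
          _ = L * t * ‖d‖ ^ 2 := by
              rw [add_sub_cancel_left, norm_smul, Real.norm_eq_abs,
                abs_of_pos ht.1]
              ring
      rw [inner_sub_left] at key
      linarith
  have h10 : h 1 ≤ h 0 := hanti (Set.left_mem_Icc.2 zero_le_one)
    (Set.right_mem_Icc.2 zero_le_one) zero_le_one
  simp only [hh, one_smul, zero_smul, add_zero, one_pow, one_mul, zero_mul,
    zero_pow, mul_zero, sub_zero] at h10
  have hxy : x + d = y := by rw [hd]; abel
  rw [hxy] at h10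
  linarith


lemma min_norm_key {n m : ℕ} (Gf : Fin m → EuclideanSpace ℝ (Fin n))
    (lam : Fin m → ℝ) (hpos : ∀ j, 0 ≤ lam j) (hsum : ∑ j, lam j = 1)
    (g : EuclideanSpace ℝ (Fin n)) (hg : g = ∑ j, lam j • Gf j)
    (hminim : ∀ mu : Fin m → ℝ, (∀ j, 0 ≤ mu j) → ∑ j, mu j = 1 →
      ‖∑ j, lam j • Gf j‖ ^ 2 ≤ ‖∑ j, mu j • Gf j‖ ^ 2)
    (j : Fin m) : ‖g‖ ^ 2 ≤ ⟪Gf j, g⟫ := by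
  set d := Gf j - g with hd
  have hcomb : ∀ t : ℝ, 0 ≤ t → t ≤ 1 → ‖g‖ ^ 2 ≤ ‖g + t • d‖ ^ 2 := by
    intro t ht0 ht1
    set mu : Fin m → ℝ := fun j' => (1 - t) * lam j' + t * (if j' = j then 1 else 0)
      with hmu
    have h1 : ∀ j', 0 ≤ mu j' := fun j' => add_nonneg
      (mul_nonneg (by linarith) (hpos j'))
      (mul_nonneg ht0 (by split <;> norm_num))
    have h2 : ∑ j', mu j' = 1 := by
      simp only [hmu, Finset.sum_add_distrib, ← Finset.mul_sum, hsum,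
        Finset.sum_ite_eq', Finset.mem_univ, if_true]
      ring
    have h3 : ∑ j', mu j' • Gf j' = g + t • d := by
      simp only [hmu, add_smul, Finset.sum_add_distrib, mul_smul,
        ← Finset.smul_sum, ← hg]
      have : ∑ j', (if j' = j then (1:ℝ) else 0) • Gf j' = Gf j := by
        simp [ite_smul]
      rw [this, hd]
      module
    have := hminim mu h1 h2
    rwa [← hg, h3] at this
  by_contra hc
  push_neg at hc
  have hgd : ⟪g, d⟫ < 0 := by
    rw [hd, inner_sub_right, real_inner_self_eq_norm_sq]
    rw [real_inner_comm] at hc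
    linarith
  have hdne : d ≠ 0 := by
    intro h0
    rw [h0, inner_zero_right] at hgd
    exact lt_irrefl _ hgd
  have hdpos : 0 < ‖d‖ ^ 2 := pow_pos (norm_pos_iff.mpr hdne) 2
  set t : ℝ := min 1 (-⟪g, d⟫ / ‖d‖ ^ 2) with htdef
  have ht0 : 0 < t := lt_min one_pos (div_pos (by linarith) hdpos)
  have ht1 : t ≤ 1 := min_le_left _ _
  have htb : t * ‖d‖ ^ 2 ≤ -⟪g, d⟫ := by
    have : t ≤ -⟪g, d⟫ / ‖d‖ ^ 2 := min_le_right _ _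
    calc t * ‖d‖ ^ 2 ≤ (-⟪g, d⟫ / ‖d‖ ^ 2) * ‖d‖ ^ 2 :=
          mul_le_mul_of_nonneg_right this (le_of_lt hdpos)
      _ = -⟪g, d⟫ := by field_simp
  have hexp := hcomb t (le_of_lt ht0) ht1
  rw [norm_add_sq_real, real_inner_smul_right, norm_smul, mul_pow,
    Real.norm_eq_abs, sq_abs] at hexp
  nlinarith [mul_pos ht0 hdpos]

/-- per-iteration descent for MO-Adagrad:
`Φ(x^{k+1}) ≤ Φ(x^k) - ‖g‖²/w + (L/2)‖g‖²/w²`. -/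
theorem stmt11 {n m : ℕ} (hm : 0 < m) (f : Fin m → EuclideanSpace ℝ (Fin n) → ℝ)
    (Gf : Fin m → EuclideanSpace ℝ (Fin n) → EuclideanSpace ℝ (Fin n))
    (hgrad : ∀ j y, HasGradientAt (f j) (Gf j y) y)
    (L : Fin m → ℝ)
    (hLip : ∀ j, ∀ y z : EuclideanSpace ℝ (Fin n), ‖Gf j y - Gf j z‖ ≤ L j * ‖y - z‖)
    (xk : EuclideanSpace ℝ (Fin n))
    (lam : Fin m → ℝ) (hpos : ∀ j, 0 ≤ lam j) (hsum : ∑ j, lam j = 1)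
    (hminim : ∀ mu : Fin m → ℝ, (∀ j, 0 ≤ mu j) → ∑ j, mu j = 1 →
      ‖∑ j, lam j • Gf j xk‖ ^ 2 ≤ ‖∑ j, mu j • Gf j xk‖ ^ 2)
    (g : EuclideanSpace ℝ (Fin n)) (hg : g = ∑ j, lam j • Gf j xk)
    (w : ℝ) (hw : 0 < w)
    (xk1 : EuclideanSpace ℝ (Fin n)) (hstep : xk1 = xk - w⁻¹ • g) :
    Finset.univ.sup' ⟨⟨0, hm⟩, Finset.mem_univ _⟩ (fun j => f j xk1) ≤
      Finset.univ.sup' ⟨⟨0, hm⟩, Finset.mem_univ _⟩ (fun j => f j xk) -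
        ‖g‖ ^ 2 / w +
        (Finset.univ.sup' ⟨⟨0, hm⟩, Finset.mem_univ _⟩ L / 2) * (‖g‖ ^ 2 / w ^ 2) := by
  have hkey : ∀ j, ‖g‖ ^ 2 ≤ ⟪Gf j xk, g⟫ :=
    min_norm_key (fun j => Gf j xk) lam hpos hsum g hg hminim
  set M := Finset.univ.sup' ⟨⟨0, hm⟩, Finset.mem_univ _⟩ (fun j => f j xk) with hM
  set LM := Finset.univ.sup' ⟨⟨0, hm⟩, Finset.mem_univ _⟩ L with hLM
  apply Finset.sup'_le
  intro j _
  have hdesc := descent_lemma (hgrad j) (hLip j) xk xk1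
  have hdiff : xk1 - xk = -(w⁻¹ • g) := by rw [hstep]; abel
  rw [hdiff] at hdesc
  have hinner : ⟪Gf j xk, -(w⁻¹ • g)⟫ = -(w⁻¹ * ⟪Gf j xk, g⟫) := by
    rw [inner_neg_right, real_inner_smul_right]
  have hnormsq : ‖-(w⁻¹ • g)‖ ^ 2 = w⁻¹ ^ 2 * ‖g‖ ^ 2 := by
    rw [norm_neg, norm_smul, mul_pow, Real.norm_eq_abs, sq_abs]
  rw [hinner, hnormsq] at hdesc
  have hfM : f j xk ≤ M := Finset.le_sup' (fun j => f j xk) (Finset.mem_univ j)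
  have hLjM : L j ≤ LM := Finset.le_sup' L (Finset.mem_univ j)
  have hgnn : (0:ℝ) ≤ ‖g‖ ^ 2 := sq_nonneg _
  have hwinv : 0 < w⁻¹ := inv_pos.mpr hw
  have h1 : -(w⁻¹ * ⟪Gf j xk, g⟫) ≤ -(‖g‖ ^ 2 / w) := by
    rw [div_eq_inv_mul, neg_le_neg_iff]
    exact mul_le_mul_of_nonneg_left (hkey j) (le_of_lt hwinv)
  have h2 : L j / 2 * (w⁻¹ ^ 2 * ‖g‖ ^ 2) ≤ LM / 2 * (‖g‖ ^ 2 / w ^ 2) := by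
    have he : w⁻¹ ^ 2 * ‖g‖ ^ 2 = ‖g‖ ^ 2 / w ^ 2 := by
      field_simp
    rw [he]
    apply mul_le_mul_of_nonneg_right (by linarith) (by positivity)
  calc f j xk1 ≤ f j xk + -(w⁻¹ * ⟪Gf j xk, g⟫) + L j / 2 * (w⁻¹ ^ 2 * ‖g‖ ^ 2) :=
        hdesc
    _ ≤ M + -(‖g‖ ^ 2 / w) + LM / 2 * (‖g‖ ^ 2 / w ^ 2) := by
        gcongr
    _ = M - ‖g‖ ^ 2 / w + LM / 2 * (‖g‖ ^ 2 / w ^ 2) := by ring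
end

section
/- (Improvement step in the simplex subproblem) Let g_1,...,g_m ∈ ℝ^n, λ ∈ Δ_m, g = Σ_j λ_j g_j, and suppose there are indices ℓ, ℓ' with λ_ℓ > 0 and γ := (g_{ℓ'} - g_ℓ)ᵀ g < 0. Then for sufficiently small ε ∈ (0, λ_ℓ), the vector λ̃ defined by λ̃_ℓ = λ_ℓ - ε, λ̃_{ℓ'} = λ_{ℓ'} + ε, λ̃_j = λ_j otherwise, lies in Δ_m and satisfies ‖Σ_j λ̃_j g_j‖₂² = ‖g‖₂² + ε(ε‖g_{ℓ'} - g_ℓ‖₂² + 2γ) < ‖g‖₂². -/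
/-- improvement step in the simplex subproblem. -/
theorem stmt19 {n m : ℕ} (g : Fin m → EuclideanSpace ℝ (Fin n))
    (lam : Fin m → ℝ) (hpos : ∀ j, 0 ≤ lam j) (hsum : ∑ j, lam j = 1)
    (G : EuclideanSpace ℝ (Fin n)) (hG : G = ∑ j, lam j • g j)
    (ℓ ℓ' : Fin m) (hne : ℓ ≠ ℓ') (hl : 0 < lam ℓ)
    (γ : ℝ) (hγdef : γ = (inner ℝ (g ℓ' - g ℓ) G : ℝ)) (hγ : γ < 0) :
    ∃ ε₀ : ℝ, 0 < ε₀ ∧ ε₀ ≤ lam ℓ ∧ ∀ ε : ℝ, 0 < ε → ε < ε₀ →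
      (∀ j, 0 ≤ (fun j => if j = ℓ then lam ℓ - ε else
          if j = ℓ' then lam ℓ' + ε else lam j) j) ∧
      (∑ j, (fun j => if j = ℓ then lam ℓ - ε else
          if j = ℓ' then lam ℓ' + ε else lam j) j) = 1 ∧
      ‖∑ j, (if j = ℓ then lam ℓ - ε else
          if j = ℓ' then lam ℓ' + ε else lam j) • g j‖ ^ 2 =
        ‖G‖ ^ 2 + ε * (ε * ‖g ℓ' - g ℓ‖ ^ 2 + 2 * γ) ∧
      ‖∑ j, (if j = ℓ then lam ℓ - ε else
          if j = ℓ' then lam ℓ' + ε else lam j) • g j‖ ^ 2 < ‖G‖ ^ 2 := by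
  set d : EuclideanSpace ℝ (Fin n) := g ℓ' - g ℓ with hd
  have hDpos : (0:ℝ) < ‖d‖ ^ 2 + 1 := by positivity
  refine ⟨min (lam ℓ) (-2 * γ / (‖d‖ ^ 2 + 1)), ?_, min_le_left _ _, ?_⟩
  · exact lt_min hl (div_pos (by linarith) hDpos)
  intro ε hε hε'
  have hεl : ε < lam ℓ := lt_of_lt_of_le hε' (min_le_left _ _)
  have hεg : ε < -2 * γ / (‖d‖ ^ 2 + 1) := lt_of_lt_of_le hε' (min_le_right _ _)
  have hkey : ε * (‖d‖ ^ 2 + 1) < -2 * γ := (lt_div_iff₀ hDpos).mp hεg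
  have hineq : ε * ‖d‖ ^ 2 + 2 * γ < 0 := by nlinarith [sq_nonneg ‖d‖]
  have hnonneg : ∀ j, 0 ≤ (fun j => if j = ℓ then lam ℓ - ε else
      if j = ℓ' then lam ℓ' + ε else lam j) j := by
    intro j
    simp only
    split_ifs with h1 h2
    · linarith
    · linarith [hpos ℓ']
    · exact hpos j
  refine ⟨hnonneg, ?_, ?_, ?_⟩
  · have : ∀ j, (if j = ℓ then lam ℓ - ε else if j = ℓ' then lam ℓ' + ε else lam j)
        = lam j + ((if j = ℓ then -ε else 0) + (if j = ℓ' then ε else 0)) := by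
      intro j
      by_cases h1 : j = ℓ
      · subst h1; simp [hne]; ring
      · by_cases h2 : j = ℓ'
        · subst h2; simp [h1]
        · simp [h1, h2]
    simp only [this, Finset.sum_add_distrib, Finset.sum_ite_eq', Finset.mem_univ, if_true, hsum]
    ring
  all_goals {
    have hvec : (∑ j, (if j = ℓ then lam ℓ - ε else
        if j = ℓ' then lam ℓ' + ε else lam j) • g j) = G + ε • d := by
      have : ∀ j, (if j = ℓ then lam ℓ - ε else if j = ℓ' then lam ℓ' + ε else lam j) • g j
          = lam j • g j + ((if j = ℓ then (-ε) • g j else 0) + (if j = ℓ' then ε • g j else 0)) := by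
        intro j
        by_cases h1 : j = ℓ
        · subst h1; simp [hne]; module
        · by_cases h2 : j = ℓ'
          · subst h2; simp [h1]; module
          · simp [h1, h2]
      simp only [this, Finset.sum_add_distrib, Finset.sum_ite_eq', Finset.mem_univ, if_true, ← hG]
      rw [hd]
      module
    have hexp : ‖G + ε • d‖ ^ 2 = ‖G‖ ^ 2 + ε * (ε * ‖d‖ ^ 2 + 2 * γ) := by
      rw [norm_add_sq_real, norm_smul, real_inner_smul_right, real_inner_comm, ← hγdef]
      simp only [mul_pow, Real.norm_eq_abs, abs_of_pos hε]
      ring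
    rw [hvec, hexp]
    try nlinarith [hineq]
  }
end
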